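/- (Invariance of the space of quadratic forms.) Let n ≥ 1 and let V ⊆ ℂ[x₁,x₂,x₃] be the ℂ-linear span of all products p·q where p and q range over polynomials that are homogeneous of degree n and satisfy Δp = Δq = 0. Then V is invariant under the rotational directional derivatives: for every v ∈ V and every i = 0,1,2, Dᵢ v ∈ V. -/

import Mathlib

open MvPolynomial

/-- Directional derivative along `f₀ = (x₂, −x₁, 0)`. -/
noncomputable def D0 : Module.End ℂ (MvPolynomial (Fin 3) ℂ) :=
  (LinearMap.mulLeft ℂ (X 1 : MvPolynomial (Fin 3) ℂ)).comp (pderiv 0).toLinearMap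
    - (LinearMap.mulLeft ℂ (X 0 : MvPolynomial (Fin 3) ℂ)).comp (pderiv 1).toLinearMap

/-- Directional derivative along `f₁ = (x₃, 0, −x₁)`. -/
noncomputable def D1 : Module.End ℂ (MvPolynomial (Fin 3) ℂ) :=
  (LinearMap.mulLeft ℂ (X 2 : MvPolynomial (Fin 3) ℂ)).comp (pderiv 0).toLinearMap
    - (LinearMap.mulLeft ℂ (X 0 : MvPolynomial (Fin 3) ℂ)).comp (pderiv 2).toLinearMap

/-- Directional derivative along `f₂ = (0, x₃, −x₂)`. -/
noncomputable def D2 : Module.End ℂ (MvPolynomial (Fin 3) ℂ) :=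
  (LinearMap.mulLeft ℂ (X 2 : MvPolynomial (Fin 3) ℂ)).comp (pderiv 1).toLinearMap
    - (LinearMap.mulLeft ℂ (X 1 : MvPolynomial (Fin 3) ℂ)).comp (pderiv 2).toLinearMap

/-- The Laplace operator on `ℂ[x₁,x₂,x₃]`. -/
noncomputable def lap (p : MvPolynomial (Fin 3) ℂ) : MvPolynomial (Fin 3) ℂ :=
  pderiv 0 (pderiv 0 p) + pderiv 1 (pderiv 1 p) + pderiv 2 (pderiv 2 p)

/-- Generic rotational directional derivative. -/
noncomputable def Dgen (a b : Fin 3) : Module.End ℂ (MvPolynomial (Fin 3) ℂ) :=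
  (LinearMap.mulLeft ℂ (X b : MvPolynomial (Fin 3) ℂ)).comp (pderiv a).toLinearMap
    - (LinearMap.mulLeft ℂ (X a : MvPolynomial (Fin 3) ℂ)).comp (pderiv b).toLinearMap

lemma Dgen_apply (a b : Fin 3) (p : MvPolynomial (Fin 3) ℂ) :
    Dgen a b p = X b * pderiv a p - X a * pderiv b p := rfl


open Finsupp in
lemma degree_fin3 (d : Fin 3 →₀ ℕ) : d.degree = d 0 + d 1 + d 2 := by
  rw [Finsupp.degree_apply, Finset.sum_subset (Finset.subset_univ d.support)
    (fun x _ hx => notMem_support_iff.mp hx), Fin.sum_univ_three]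

open Finsupp in
lemma homog_pderiv {n : ℕ} (i : Fin 3) {p : MvPolynomial (Fin 3) ℂ}
    (hp : p.IsHomogeneous n) : (pderiv i p).IsHomogeneous (n - 1) := by
  rw [p.as_sum, map_sum]
  apply IsHomogeneous.sum
  intro d hd
  rw [pderiv_monomial]
  rcases Nat.eq_zero_or_pos (d i) with h | h
  · simp [h]
    exact isHomogeneous_zero _ _ _
  · apply isHomogeneous_monomial
    have hdeg : d.degree = n := by
      rw [degree_eq_weight_one]
      exact hp (MvPolynomial.mem_support_iff.mp hd)
    rw [degree_fin3] at hdeg ⊢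
    simp only [tsub_apply, single_apply]
    fin_cases i <;> simp_all <;> omega

lemma pd_comm (i j : Fin 3) (p : MvPolynomial (Fin 3) ℂ) :
    pderiv i (pderiv j p) = pderiv j (pderiv i p) := by
  induction p using MvPolynomial.induction_on with
  | C a => simp
  | add p q hp hq => simp [hp, hq]
  | mul_X p k hp =>
    simp only [pderiv_mul, pderiv_X, map_add, hp, Pi.single_apply]
    split_ifs <;> simp <;> ring

lemma lap_pderiv (i : Fin 3) (p : MvPolynomial (Fin 3) ℂ) :
    lap (pderiv i p) = pderiv i (lap p) := by
  simp only [lap, map_add]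
  rw [pd_comm 0 i, pd_comm 0 i, pd_comm 1 i, pd_comm 1 i, pd_comm 2 i, pd_comm 2 i]

lemma lap_Xmul (j : Fin 3) (r : MvPolynomial (Fin 3) ℂ) :
    lap (X j * r) = 2 * pderiv j r + X j * lap r := by
  fin_cases j <;>
  · simp [lap, pderiv_mul, pderiv_X, Pi.single_apply, Fin.ext_iff]
    ring

lemma lap_sub (p q : MvPolynomial (Fin 3) ℂ) : lap (p - q) = lap p - lap q := by
  simp only [lap, map_sub]; ring

lemma lap_Dgen (a b : Fin 3) (p : MvPolynomial (Fin 3) ℂ) (hp : lap p = 0) :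
    lap (Dgen a b p) = 0 := by
  rw [Dgen_apply, lap_sub, lap_Xmul, lap_Xmul, lap_pderiv, lap_pderiv, hp,
    pd_comm b a]
  simp

lemma homog_Dgen (a b : Fin 3) {n : ℕ} (hn : 1 ≤ n) {p : MvPolynomial (Fin 3) ℂ}
    (hp : p.IsHomogeneous n) : (Dgen a b p).IsHomogeneous n := by
  rw [Dgen_apply]
  have h1 := (isHomogeneous_X ℂ b).mul (homog_pderiv a hp)
  have h2 := (isHomogeneous_X ℂ a).mul (homog_pderiv b hp)
  rw [show 1 + (n - 1) = n by omega] at h1 h2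
  exact h1.sub h2

lemma Dgen_mul (a b : Fin 3) (p q : MvPolynomial (Fin 3) ℂ) :
    Dgen a b (p * q) = Dgen a b p * q + p * Dgen a b q := by
  simp only [Dgen_apply, pderiv_mul]
  ring

lemma Dgen_span (a b : Fin 3) {n : ℕ} (hn : 1 ≤ n) :
    ∀ v ∈ Submodule.span ℂ {r : MvPolynomial (Fin 3) ℂ |
        ∃ p q : MvPolynomial (Fin 3) ℂ, p.IsHomogeneous n ∧ lap p = 0 ∧
          q.IsHomogeneous n ∧ lap q = 0 ∧ r = p * q},
      Dgen a b v ∈ Submodule.span ℂ {r : MvPolynomial (Fin 3) ℂ |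
        ∃ p q : MvPolynomial (Fin 3) ℂ, p.IsHomogeneous n ∧ lap p = 0 ∧
          q.IsHomogeneous n ∧ lap q = 0 ∧ r = p * q} := by
  intro v hv
  set S := {r : MvPolynomial (Fin 3) ℂ |
      ∃ p q : MvPolynomial (Fin 3) ℂ, p.IsHomogeneous n ∧ lap p = 0 ∧
        q.IsHomogeneous n ∧ lap q = 0 ∧ r = p * q} with hS
  have hle : Submodule.span ℂ S ≤ Submodule.comap (Dgen a b) (Submodule.span ℂ S) := by
    rw [Submodule.span_le]
    rintro r ⟨p, q, hp, hlp, hq, hlq, rfl⟩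
    simp only [SetLike.mem_coe, Submodule.mem_comap, Dgen_mul]
    refine Submodule.add_mem _ (Submodule.subset_span ?_) (Submodule.subset_span ?_)
    · exact ⟨Dgen a b p, q, homog_Dgen a b hn hp, lap_Dgen a b p hlp, hq, hlq, rfl⟩
    · exact ⟨p, Dgen a b q, hp, hlp, homog_Dgen a b hn hq, lap_Dgen a b q hlq, rfl⟩
  exact hle hv

/-- The span of products of two harmonic homogeneous polynomials of degree `n` is
invariant under the rotational directional derivatives `D₀, D₁, D₂`. -/
theorem quadratic_span_invariant (n : ℕ) (hn : 1 ≤ n) :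
    ∀ v ∈ Submodule.span ℂ {r : MvPolynomial (Fin 3) ℂ |
        ∃ p q : MvPolynomial (Fin 3) ℂ, p.IsHomogeneous n ∧ lap p = 0 ∧
          q.IsHomogeneous n ∧ lap q = 0 ∧ r = p * q},
      D0 v ∈ Submodule.span ℂ {r : MvPolynomial (Fin 3) ℂ |
        ∃ p q : MvPolynomial (Fin 3) ℂ, p.IsHomogeneous n ∧ lap p = 0 ∧
          q.IsHomogeneous n ∧ lap q = 0 ∧ r = p * q} ∧
      D1 v ∈ Submodule.span ℂ {r : MvPolynomial (Fin 3) ℂ |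
        ∃ p q : MvPolynomial (Fin 3) ℂ, p.IsHomogeneous n ∧ lap p = 0 ∧
          q.IsHomogeneous n ∧ lap q = 0 ∧ r = p * q} ∧
      D2 v ∈ Submodule.span ℂ {r : MvPolynomial (Fin 3) ℂ |
        ∃ p q : MvPolynomial (Fin 3) ℂ, p.IsHomogeneous n ∧ lap p = 0 ∧
          q.IsHomogeneous n ∧ lap q = 0 ∧ r = p * q} := by
  intro v hv
  have e0 : D0 = Dgen 0 1 := rfl
  have e1 : D1 = Dgen 0 2 := rfl
  have e2 : D2 = Dgen 1 2 := rfl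
  exact ⟨e0 ▸ Dgen_span 0 1 hn v hv, e1 ▸ Dgen_span 0 2 hn v hv, e2 ▸ Dgen_span 1 2 hn v hv⟩
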